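/- Let N ≥ 1, let θ_1,…,θ_N, φ_1,…,φ_N ∈ ℝ, let A = ⊗_{l=1}^N A(θ_l, φ_l) and B = σ_Z^{⊗N}. If there exists exactly one bit string m ∈ {0,1}^N with m_1 = 0 such that sin((Σ_{l=1}^N (−1)^{m_l} θ_l)/2) = 0, then the common +1 eigenspace of A and B (the set of ψ with Aψ = ψ and Bψ = ψ) is one-dimensional, and it is spanned by an N-GHZ state. -/

import Mathlib

open Matrix Finset

/-- Tensor product of `N` 2×2 complex matrices, indexed by bit strings. -/
noncomputable def tensorN {N : ℕ} (M : Fin N → Matrix (Fin 2) (Fin 2) ℂ) :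
    Matrix (Fin N → Fin 2) (Fin N → Fin 2) ℂ :=
  fun i j => ∏ l, M l (i l) (j l)

/-- The spin observable `A(θ,φ)`. -/
noncomputable def spinA (θ φ : ℝ) : Matrix (Fin 2) (Fin 2) ℂ :=
  !![(Real.cos θ : ℂ), Complex.exp (-(φ : ℂ) * Complex.I) * (Real.sin θ : ℂ);
     Complex.exp ((φ : ℂ) * Complex.I) * (Real.sin θ : ℂ), -(Real.cos θ : ℂ)]

/-- The Pauli matrix `σ_Z`. -/
def sigmaZ : Matrix (Fin 2) (Fin 2) ℂ := !![1, 0; 0, -1]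

/-- The standard GHZ state `(|0…0⟩ + |1…1⟩)/√2` in `ℂ^{2^N}`. -/
noncomputable def ghzN (N : ℕ) : (Fin N → Fin 2) → ℂ :=
  (Real.sqrt 2 : ℂ)⁻¹ • (Pi.single (fun _ => 0) 1 + Pi.single (fun _ => 1) 1)

/-- A state is an `N`-GHZ state if it is a local-unitary image of `ghzN N`. -/
def IsGHZ {N : ℕ} (ψ : (Fin N → Fin 2) → ℂ) : Prop :=
  ∃ U : Fin N → Matrix (Fin 2) (Fin 2) ℂ,
    (∀ l, U l ∈ Matrix.unitaryGroup (Fin 2) ℂ) ∧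
    ψ = (tensorN U).mulVec (ghzN N)

open Complex in
/-- local change-of-basis matrix whose columns are the two rotated basis vectors. -/
noncomputable def Gl (θ φ : ℝ) : Matrix (Fin 2) (Fin 2) ℂ :=
  !![Complex.exp ((-(θ/2) : ℝ) * I), Complex.exp (((θ/2) : ℝ) * I);
     I * Complex.exp (((φ - θ/2) : ℝ) * I), -I * Complex.exp (((φ + θ/2) : ℝ) * I)]

def sigmaX : Matrix (Fin 2) (Fin 2) ℂ := !![0,1;1,0]

open Complex in
noncomputable def Emat (θ : ℝ) : Matrix (Fin 2) (Fin 2) ℂ :=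
  !![0, Complex.exp ((θ:ℝ) * I); Complex.exp ((-θ:ℝ) * I), 0]

def Xpow : Fin 2 → Matrix (Fin 2) (Fin 2) ℂ := fun s => if s = 0 then 1 else sigmaX

def bflip {N : ℕ} (p : Fin N → Fin 2) : Fin N → Fin 2 := fun l => 1 - p l

lemma bflip_bflip {N : ℕ} (p : Fin N → Fin 2) : bflip (bflip p) = p := by
  funext l
  have : ∀ a : Fin 2, 1 - (1 - a) = a := by decide
  simp only [bflip, this]

lemma neg_one_pow_bflip (a : Fin 2) :
    ((-1 : ℝ))^(((1 - a : Fin 2)):ℕ) = -(-1 : ℝ)^((a : Fin 2):ℕ) := by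
  fin_cases a <;> norm_num

lemma prod_ite_zero {N : ℕ} (C : Fin N → Prop) [DecidablePred C] (f : Fin N → ℂ) :
    (∏ l, if C l then f l else 0) = if ∀ l, C l then ∏ l, f l else 0 := by
  by_cases h : ∀ l, C l
  · rw [if_pos h]; exact Finset.prod_congr rfl fun l _ => if_pos (h l)
  · rw [if_neg h]
    push_neg at h
    obtain ⟨l, hl⟩ := h
    exact Finset.prod_eq_zero (Finset.mem_univ l) (if_neg hl)

lemma L1 (θ φ : ℝ) : spinA θ φ * Gl θ φ = Gl θ φ * sigmaX := by
  ext i j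
  fin_cases i <;> fin_cases j <;>
    · simp [spinA, Gl, sigmaX, Matrix.mul_apply, Fin.sum_univ_two, Complex.cos, Complex.sin]
      try field_simp
      try ring_nf
      try simp [Complex.I_sq, Complex.exp_zero, ← Complex.exp_add, mul_comm, mul_left_comm, mul_assoc]
      try ring_nf
      try simp [Complex.I_sq, Complex.exp_zero, ← Complex.exp_add, mul_comm, mul_left_comm, mul_assoc]
      try ring_nf

lemma L2 (θ φ : ℝ) : sigmaZ * Gl θ φ = Gl θ φ * Emat θ := by
  ext i j
  fin_cases i <;> fin_cases j <;>
    · simp [sigmaZ, Gl, Emat, Matrix.mul_apply, Fin.sum_univ_two]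
      try field_simp
      try ring_nf
      try simp [Complex.I_sq, Complex.exp_zero, ← Complex.exp_add, mul_comm, mul_left_comm, mul_assoc]
      try ring_nf
      try simp [Complex.I_sq, Complex.exp_zero, ← Complex.exp_add, mul_comm, mul_left_comm, mul_assoc]
      try ring_nf

lemma L3 (θ φ : ℝ) : Gl θ φ * (Gl θ φ)ᴴ = (2:ℂ) • 1 := by
  ext i j
  fin_cases i <;> fin_cases j <;>
    · simp [Gl, Matrix.mul_apply, Matrix.conjTranspose_apply, Fin.sum_univ_two,
        _root_.map_mul, map_div₀, map_ofNat, Complex.conj_I, ← Complex.exp_conj,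
        Complex.conj_ofReal, Matrix.one_apply]
      try field_simp
      try ring_nf
      try simp [Complex.I_sq, Complex.exp_zero, ← Complex.exp_add, mul_comm, mul_left_comm, mul_assoc]
      try ring_nf
      try simp [Complex.I_sq, Complex.exp_zero, ← Complex.exp_add, mul_comm, mul_left_comm, mul_assoc]
      try ring_nf

lemma L4 (θ φ : ℝ) : Gl θ φ * ((2:ℂ)⁻¹ • (Gl θ φ)ᴴ) = 1 := by
  rw [Matrix.mul_smul, L3, smul_smul]
  norm_num

lemma tensorN_mul {N : ℕ} (M P : Fin N → Matrix (Fin 2) (Fin 2) ℂ) :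
    tensorN (fun l => M l * P l) = tensorN M * tensorN P := by
  ext i j
  simp only [tensorN, Matrix.mul_apply]
  rw [Finset.prod_univ_sum]
  rw [show (Fintype.piFinset fun _ : Fin N => (univ : Finset (Fin 2))) = univ by ext; simp]
  exact Finset.sum_congr rfl fun k _ => by rw [Finset.prod_mul_distrib]

lemma tensorN_one {N : ℕ} : tensorN (fun _ : Fin N => (1 : Matrix (Fin 2) (Fin 2) ℂ)) = 1 := by
  ext i j
  simp only [tensorN, Matrix.one_apply]
  by_cases h : i = j
  · subst h; simp
  · rw [if_neg h]
    obtain ⟨l, hl⟩ := Function.ne_iff.mp h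
    exact Finset.prod_eq_zero (Finset.mem_univ l) (by simp [hl])

lemma tensorN_smul {N : ℕ} (c : ℂ) (M : Fin N → Matrix (Fin 2) (Fin 2) ℂ) :
    tensorN (fun l => c • M l) = (c ^ N) • tensorN M := by
  ext i j
  simp [tensorN, Finset.prod_mul_distrib]

lemma sigmaX_apply (a b : Fin 2) : sigmaX a b = if b = 1 - a then 1 else 0 := by
  fin_cases a <;> fin_cases b <;> simp [sigmaX] <;> decide

open Complex in
lemma Emat_apply (θ : ℝ) (a b : Fin 2) :
    Emat θ a b = if b = 1 - a then Complex.exp ((((-1:ℝ)^((a:Fin 2):ℕ) * θ : ℝ)) * I) else 0 := by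
  fin_cases a <;> fin_cases b <;> simp [Emat] <;> norm_num

lemma tensor_sigmaX_mulVec {N : ℕ} (d : (Fin N → Fin 2) → ℂ) :
    (tensorN fun _ => sigmaX).mulVec d = fun p => d (bflip p) := by
  funext p
  simp only [Matrix.mulVec, dotProduct, tensorN, sigmaX_apply]
  rw [Finset.sum_congr rfl fun q _ => by rw [_root_.prod_ite_zero]]
  have : ∀ q : Fin N → Fin 2, (∀ l, q l = 1 - p l) ↔ q = bflip p := by
    intro q; rw [funext_iff]; rfl
  simp only [this]
  simp [Finset.sum_ite_eq']

open Complex in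
lemma tensor_Emat_mulVec {N : ℕ} (θ : Fin N → ℝ) (d : (Fin N → Fin 2) → ℂ) :
    (tensorN fun l => Emat (θ l)).mulVec d
      = fun p => Complex.exp (((∑ l, (-1:ℝ)^((p l : Fin 2):ℕ) * θ l : ℝ)) * I) * d (bflip p) := by
  funext p
  simp only [Matrix.mulVec, dotProduct, tensorN, Emat_apply]
  rw [Finset.sum_congr rfl fun q _ => by rw [_root_.prod_ite_zero]]
  have h1 : ∀ q : Fin N → Fin 2, (∀ l, q l = 1 - p l) ↔ q = bflip p := by
    intro q; rw [funext_iff]; rfl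
  simp only [h1]
  have h2 : (∏ l, Complex.exp ((((-1:ℝ)^((p l : Fin 2):ℕ) * θ l : ℝ)) * I))
      = Complex.exp (((∑ l, (-1:ℝ)^((p l : Fin 2):ℕ) * θ l : ℝ)) * I) := by
    rw [show ((((∑ l, (-1:ℝ)^((p l : Fin 2):ℕ) * θ l : ℝ)) : ℂ) * I)
        = ∑ l, ((((-1:ℝ)^((p l : Fin 2):ℕ) * θ l : ℝ) : ℂ) * I) by push_cast; rw [Finset.sum_mul]]
    rw [Complex.exp_sum]
  rw [← h2]
  simp [Finset.sum_ite_eq']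

open Complex in
lemma exp_I_eq_one_iff (x : ℝ) : Complex.exp ((x:ℝ) * I) = 1 ↔ Real.sin (x/2) = 0 := by
  rw [Complex.exp_eq_one_iff, Real.sin_eq_zero_iff]
  constructor
  · rintro ⟨n, hn⟩
    refine ⟨n, ?_⟩
    have h2 : (x : ℂ) = n * (2 * Real.pi) := by
      exact mul_right_cancel₀ Complex.I_ne_zero
        (by rw [hn]; ring_nf : (x : ℂ) * I = (↑n * (2 * ↑Real.pi)) * I)
    have : x = n * (2 * Real.pi) := by exact_mod_cast h2
    linarith
  · rintro ⟨n, hn⟩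
    refine ⟨n, ?_⟩
    have : x = n * (2 * Real.pi) := by linarith
    rw [this]; push_cast; ring

lemma Xpow_col0 (s a : Fin 2) : Xpow s a 0 = if a = s then 1 else 0 := by
  fin_cases s <;> fin_cases a <;> simp [Xpow, sigmaX, Matrix.one_apply]

lemma Xpow_col1 (s a : Fin 2) : Xpow s a 1 = if a = 1 - s then 1 else 0 := by
  fin_cases s <;> fin_cases a <;> simp [Xpow, sigmaX, Matrix.one_apply] <;> decide

lemma Xpow_mul_star (s : Fin 2) : Xpow s * (Xpow s)ᴴ = 1 := by
  have hs : s = 0 ∨ s = 1 := by omega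
  rcases hs with hs | hs <;> subst hs
  · simp [Xpow]
  · have h1 : Xpow 1 = sigmaX := by simp [Xpow]
    rw [h1]
    ext i j
    fin_cases i <;> fin_cases j <;>
      simp [sigmaX, Matrix.mul_apply, Matrix.conjTranspose_apply, Fin.sum_univ_two,
        Matrix.one_apply]

lemma sqrt2_mul_self : ((Real.sqrt 2 : ℝ) : ℂ) * ((Real.sqrt 2 : ℝ) : ℂ) = 2 := by
  norm_cast
  rw [Real.mul_self_sqrt] <;> norm_num

lemma sqrt2_ne_zero : ((Real.sqrt 2 : ℝ) : ℂ) ≠ 0 := by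
  simp only [ne_eq, Complex.ofReal_eq_zero]
  positivity

lemma Ul_unitary (θ φ : ℝ) (s : Fin 2) :
    (Real.sqrt 2 : ℂ)⁻¹ • (Gl θ φ * Xpow s) ∈ Matrix.unitaryGroup (Fin 2) ℂ := by
  rw [Matrix.mem_unitaryGroup_iff]
  have hstar : star ((Real.sqrt 2:ℂ)⁻¹ • (Gl θ φ * Xpow s))
      = (Real.sqrt 2:ℂ)⁻¹ • ((Xpow s)ᴴ * (Gl θ φ)ᴴ) := by
    simp [Matrix.star_eq_conjTranspose, Matrix.conjTranspose_smul, Matrix.conjTranspose_mul,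
      star_inv₀, Complex.star_def, Complex.conj_ofReal]
  rw [hstar, Matrix.smul_mul, Matrix.mul_smul, smul_smul]
  have h2 : ((Real.sqrt 2:ℂ))⁻¹ * (Real.sqrt 2:ℂ)⁻¹ = (2:ℂ)⁻¹ := by
    rw [← mul_inv, sqrt2_mul_self]
  have h3 : Gl θ φ * Xpow s * ((Xpow s)ᴴ * (Gl θ φ)ᴴ) = (2:ℂ) • 1 := by
    rw [mul_assoc, ← mul_assoc (Xpow s), Xpow_mul_star, one_mul, L3]
  rw [h2, h3, smul_smul]
  norm_num

theorem stmt1 (N : ℕ) (hN : 1 ≤ N) (θ φ : Fin N → ℝ)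
    (h : ∃! m : Fin N → Fin 2, m ⟨0, hN⟩ = 0 ∧
      Real.sin ((∑ l, (-1 : ℝ) ^ (m l : ℕ) * θ l) / 2) = 0) :
    ∃ ψ : (Fin N → Fin 2) → ℂ, IsGHZ ψ ∧
      {χ : (Fin N → Fin 2) → ℂ |
          (tensorN (fun l => spinA (θ l) (φ l))).mulVec χ = χ ∧
          (tensorN (fun _ => sigmaZ)).mulVec χ = χ}
        = ↑(Submodule.span ℂ {ψ}) := by
  classical
  obtain ⟨m, ⟨hm0, hmsin⟩, hmuniq⟩ := h
  -- global matrices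
  have hGH : tensorN (fun l => Gl (θ l) (φ l)) * tensorN (fun l => (2:ℂ)⁻¹ • (Gl (θ l) (φ l))ᴴ) = 1 := by
    rw [← tensorN_mul,
      show (fun l => Gl (θ l) (φ l) * ((2:ℂ)⁻¹ • (Gl (θ l) (φ l))ᴴ))
        = fun _ : Fin N => (1 : Matrix (Fin 2) (Fin 2) ℂ) from funext fun l => L4 _ _]
    exact tensorN_one
  have hHG : tensorN (fun l => (2:ℂ)⁻¹ • (Gl (θ l) (φ l))ᴴ) * tensorN (fun l => Gl (θ l) (φ l)) = 1 :=
    mul_eq_one_comm.mp hGH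
  have hAG : tensorN (fun l => spinA (θ l) (φ l)) * tensorN (fun l => Gl (θ l) (φ l))
      = tensorN (fun l => Gl (θ l) (φ l)) * tensorN (fun _ => sigmaX) := by
    rw [← tensorN_mul, ← tensorN_mul]
    exact congrArg tensorN (funext fun l => L1 _ _)
  have hBG : tensorN (fun _ : Fin N => sigmaZ) * tensorN (fun l => Gl (θ l) (φ l))
      = tensorN (fun l => Gl (θ l) (φ l)) * tensorN (fun l => Emat (θ l)) := by
    rw [← tensorN_mul, ← tensorN_mul]
    exact congrArg tensorN (funext fun l => L2 _ _)
  have hcancel : ∀ u v : (Fin N → Fin 2) → ℂ,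
      (tensorN fun l => Gl (θ l) (φ l)).mulVec u = (tensorN fun l => Gl (θ l) (φ l)).mulVec v → u = v := by
    intro u v huv
    have h2 := congrArg (fun x => (tensorN fun l => (2:ℂ)⁻¹ • (Gl (θ l) (φ l))ᴴ).mulVec x) huv
    simpa [Matrix.mulVec_mulVec, hHG, Matrix.one_mulVec] using h2
  -- sum flip
  have hsum_flip : ∀ p : Fin N → Fin 2,
      (∑ l, (-1:ℝ)^(((bflip p) l : ℕ)) * θ l) = - ∑ l, (-1:ℝ)^((p l : ℕ)) * θ l := by
    intro p
    have h1 : ∀ l : Fin N, (-1:ℝ)^(((bflip p) l : ℕ)) * θ l = -((-1:ℝ)^((p l : ℕ)) * θ l) := by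
      intro l
      rw [show (bflip p) l = 1 - p l from rfl, neg_one_pow_bflip]
      ring
    rw [Finset.sum_congr rfl fun l _ => h1 l, Finset.sum_neg_distrib]
  have hSm : Complex.exp (((∑ l, (-1:ℝ)^((m l : ℕ)) * θ l : ℝ)) * Complex.I) = 1 :=
    (exp_I_eq_one_iff _).mpr hmsin
  have hSbm : Complex.exp (((∑ l, (-1:ℝ)^(((bflip m) l : ℕ)) * θ l : ℝ)) * Complex.I) = 1 := by
    rw [hsum_flip]
    exact (exp_I_eq_one_iff _).mpr (by rw [neg_div, Real.sin_neg, hmsin, neg_zero])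
  have hbm_ne : bflip m ≠ m := by
    intro hc
    have h2 : (1 : Fin 2) - m ⟨0,hN⟩ = m ⟨0,hN⟩ := congrFun hc ⟨0,hN⟩
    rw [hm0] at h2
    exact absurd h2 (by decide)
  -- the vector w
  set w : (Fin N → Fin 2) → ℂ := Pi.single m 1 + Pi.single (bflip m) 1 with hw
  have hw_apply : ∀ p, w p = (if p = m then 1 else 0) + (if p = bflip m then 1 else 0) := by
    intro p; simp [hw, Pi.single_apply]
  have hw_flip : ∀ p, w (bflip p) = w p := by
    intro p
    rw [hw_apply, hw_apply]
    have e1 : bflip p = m ↔ p = bflip m :=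
      ⟨fun h => by rw [← h, bflip_bflip], fun h => by rw [h, bflip_bflip]⟩
    have e2 : bflip p = bflip m ↔ p = m :=
      ⟨fun h => by rw [← bflip_bflip p, h, bflip_bflip], fun h => by rw [h]⟩
    simp only [e1, e2]
    ring
  have hXw : (tensorN fun _ : Fin N => sigmaX).mulVec w = w := by
    rw [tensor_sigmaX_mulVec]; funext p; exact hw_flip p
  have hEw : (tensorN fun l => Emat (θ l)).mulVec w = w := by
    rw [tensor_Emat_mulVec]
    funext p
    by_cases hp1 : p = m
    · subst hp1; rw [hw_flip, hSm, one_mul]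
    · by_cases hp2 : p = bflip m
      · subst hp2; rw [hw_flip, hSbm, one_mul]
      · rw [hw_flip]
        rw [hw_apply, if_neg hp1, if_neg hp2]
        ring
  -- XP column computation
  have hXP : (tensorN fun l => Xpow (m l)).mulVec
      (Pi.single (fun _ => 0) 1 + Pi.single (fun _ => 1) 1) = w := by
    rw [Matrix.mulVec_add, Matrix.mulVec_single_one, Matrix.mulVec_single_one]
    funext i
    simp only [Pi.add_apply, mul_one, Matrix.col_apply]
    have c0 : tensorN (fun l => Xpow (m l)) i (fun _ => 0) = if i = m then 1 else 0 := by
      show (∏ l, Xpow (m l) (i l) 0) = _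
      simp only [Xpow_col0]
      rw [_root_.prod_ite_zero]
      simp [funext_iff]
    have c1 : tensorN (fun l => Xpow (m l)) i (fun _ => 1) = if i = bflip m then 1 else 0 := by
      show (∏ l, Xpow (m l) (i l) 1) = _
      simp only [Xpow_col1]
      rw [_root_.prod_ite_zero]
      have : (∀ l, i l = 1 - m l) ↔ i = bflip m := by rw [funext_iff]; rfl
      simp [this]
    rw [c0, c1, hw_apply]
  -- the GHZ state
  refine ⟨(tensorN (fun l => (Real.sqrt 2:ℂ)⁻¹ • (Gl (θ l) (φ l) * Xpow (m l)))).mulVec (ghzN N),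
    ⟨fun l => (Real.sqrt 2:ℂ)⁻¹ • (Gl (θ l) (φ l) * Xpow (m l)),
      fun l => Ul_unitary _ _ _, rfl⟩, ?_⟩
  set c₀ : ℂ := ((Real.sqrt 2:ℂ)⁻¹)^N * (Real.sqrt 2:ℂ)⁻¹ with hc₀def
  have hc₀ : c₀ ≠ 0 := by
    apply mul_ne_zero
    · exact pow_ne_zero _ (inv_ne_zero sqrt2_ne_zero)
    · exact inv_ne_zero sqrt2_ne_zero
  have hψ : (tensorN (fun l => (Real.sqrt 2:ℂ)⁻¹ • (Gl (θ l) (φ l) * Xpow (m l)))).mulVec (ghzN N)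
      = c₀ • (tensorN (fun l => Gl (θ l) (φ l))).mulVec w := by
    have e1 : tensorN (fun l => (Real.sqrt 2:ℂ)⁻¹ • (Gl (θ l) (φ l) * Xpow (m l)))
        = ((Real.sqrt 2:ℂ)⁻¹)^N •
          (tensorN (fun l => Gl (θ l) (φ l)) * tensorN (fun l => Xpow (m l))) := by
      rw [tensorN_smul, tensorN_mul]
    rw [e1, ghzN, Matrix.smul_mulVec, Matrix.mulVec_smul, ← Matrix.mulVec_mulVec, hXP,
      smul_smul]
  have hAψ : (tensorN (fun l => spinA (θ l) (φ l))).mulVec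
      ((tensorN (fun l => (Real.sqrt 2:ℂ)⁻¹ • (Gl (θ l) (φ l) * Xpow (m l)))).mulVec (ghzN N))
      = (tensorN (fun l => (Real.sqrt 2:ℂ)⁻¹ • (Gl (θ l) (φ l) * Xpow (m l)))).mulVec (ghzN N) := by
    rw [hψ, Matrix.mulVec_smul, Matrix.mulVec_mulVec, hAG, ← Matrix.mulVec_mulVec, hXw]
  have hBψ : (tensorN (fun _ : Fin N => sigmaZ)).mulVec
      ((tensorN (fun l => (Real.sqrt 2:ℂ)⁻¹ • (Gl (θ l) (φ l) * Xpow (m l)))).mulVec (ghzN N))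
      = (tensorN (fun l => (Real.sqrt 2:ℂ)⁻¹ • (Gl (θ l) (φ l) * Xpow (m l)))).mulVec (ghzN N) := by
    rw [hψ, Matrix.mulVec_smul, Matrix.mulVec_mulVec, hBG, ← Matrix.mulVec_mulVec, hEw]
  ext χ
  simp only [Set.mem_setOf_eq, SetLike.mem_coe, Submodule.mem_span_singleton]
  constructor
  · rintro ⟨hA, hB⟩
    set d := (tensorN fun l => (2:ℂ)⁻¹ • (Gl (θ l) (φ l))ᴴ).mulVec χ with hd
    have hχ : χ = (tensorN fun l => Gl (θ l) (φ l)).mulVec d := by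
      rw [hd, Matrix.mulVec_mulVec, hGH, Matrix.one_mulVec]
    have hXd : (tensorN fun _ : Fin N => sigmaX).mulVec d = d := by
      apply hcancel
      rw [Matrix.mulVec_mulVec, ← hAG, ← Matrix.mulVec_mulVec, ← hχ, hA]
    have hEd : (tensorN fun l => Emat (θ l)).mulVec d = d := by
      apply hcancel
      rw [Matrix.mulVec_mulVec, ← hBG, ← Matrix.mulVec_mulVec, ← hχ, hB]
    rw [tensor_sigmaX_mulVec] at hXd
    rw [tensor_Emat_mulVec] at hEd
    have hd1 : ∀ p, d (bflip p) = d p := fun p => congrFun hXd p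
    have hd2 : ∀ p : Fin N → Fin 2,
        Complex.exp (((∑ l, (-1:ℝ)^((p l : ℕ)) * θ l : ℝ)) * Complex.I) * d (bflip p) = d p :=
      fun p => congrFun hEd p
    have hsupp : ∀ p, p ≠ m → p ≠ bflip m → d p = 0 := by
      intro p hp1 hp2
      by_contra hdp
      have h2 := hd2 p
      rw [hd1 p] at h2
      have hexp : Complex.exp (((∑ l, (-1:ℝ)^((p l : ℕ)) * θ l : ℝ)) * Complex.I) = 1 :=
        mul_right_cancel₀ hdp (by rw [h2, one_mul])
      have hsin : Real.sin ((∑ l, (-1:ℝ)^((p l : ℕ)) * θ l)/2) = 0 :=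
        (exp_I_eq_one_iff _).mp hexp
      have hcase : p ⟨0,hN⟩ = 0 ∨ p ⟨0,hN⟩ = 1 := by omega
      rcases hcase with hc | hc
      · exact hp1 (hmuniq p ⟨hc, hsin⟩)
      · have hq0 : (bflip p) ⟨0,hN⟩ = 0 := by
          show 1 - p ⟨0,hN⟩ = 0
          rw [hc]
          decide
        have hqsin : Real.sin ((∑ l, (-1:ℝ)^(((bflip p) l : ℕ)) * θ l)/2) = 0 := by
          rw [hsum_flip, neg_div, Real.sin_neg, hsin, neg_zero]
        have h3 : bflip p = m := hmuniq _ ⟨hq0, hqsin⟩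
        exact hp2 (by rw [← h3, bflip_bflip])
    obtain ⟨a, hdw⟩ : ∃ a : ℂ, d = a • w := by
      refine ⟨d m, ?_⟩
      funext p
      rw [Pi.smul_apply, hw_apply p, smul_eq_mul]
      by_cases hp1 : p = m
      · subst hp1
        rw [if_pos rfl, if_neg (fun hc => hbm_ne hc.symm)]
        ring
      · by_cases hp2 : p = bflip m
        · subst hp2
          rw [if_neg (fun hc => hbm_ne hc), if_pos rfl, hd1 m]
          ring
        · rw [hsupp p hp1 hp2, if_neg hp1, if_neg hp2]
          ring
    refine ⟨a * c₀⁻¹, ?_⟩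
    rw [hψ, smul_smul, mul_assoc, inv_mul_cancel₀ hc₀, mul_one, hχ, hdw, Matrix.mulVec_smul]
  · rintro ⟨a, ha⟩
    rw [← ha]
    constructor
    · rw [Matrix.mulVec_smul, hAψ]
    · rw [Matrix.mulVec_smul, hBψ]
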